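/- Let G be a finite simple graph on n vertices of girth at least 5, and let B be a Hermitian weighted adjacency matrix of G such that every row of B has L² norm 1, i.e. Σ_{j=1}^n |B_{ij}|² = 1 for all i ∈ {1,…,n}. Then n_{≥0}(B) ≥ n/4. -/

import Mathlib

open Matrix Finset

/-- A graph is `C4`-free if it has no cycle of length 4 as a (not necessarily induced)
subgraph: there are no four pairwise distinct vertices `a, b, c, d` with
`ab`, `bc`, `cd`, `da` all edges. -/
def C4Free {V : Type*} (G : SimpleGraph V) : Prop :=
  ∀ a b c d : V, a ≠ b → a ≠ c → a ≠ d → b ≠ c → b ≠ d → c ≠ d →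
    G.Adj a b → G.Adj b c → G.Adj c d → ¬ G.Adj d a

-- auxiliary: conjugation and powers
private lemma conj_pow_aux {n : ℕ} (U D Bm : Matrix (Fin n) (Fin n) ℂ)
    (hUU : star U * U = 1) (hUU' : U * star U = 1)
    (hBm : Bm = U * D * star U) (k : ℕ) : Bm ^ k = U * D ^ k * star U := by
  induction k with
  | zero => simpa using hUU'.symm
  | succ k ih =>
    rw [pow_succ, ih, hBm, pow_succ]
    rw [mul_assoc (U * D ^ k) (star U) (U * D * star U)]
    rw [show star U * (U * D * star U) = star U * U * D * star U by
      simp only [mul_assoc]]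
    rw [hUU, one_mul]
    simp only [mul_assoc]

private lemma mul_star_aux (z : ℂ) : z * star z = ((‖z‖ ^ 2 : ℝ) : ℂ) := by
  rw [show (star z) = (starRingEnd ℂ) z from rfl, Complex.mul_conj]
  rw [Complex.normSq_eq_norm_sq]

private lemma trace_sq_aux {n : ℕ} (M : Matrix (Fin n) (Fin n) ℂ) (hM : M.IsHermitian) :
    (M * M).trace = ((∑ i, ∑ j, ‖M i j‖ ^ 2 : ℝ) : ℂ) := by
  have hMsymm : ∀ i j : Fin n, M j i = star (M i j) := fun i j =>
    (congrFun (congrFun hM.symm j) i).trans (Matrix.conjTranspose_apply M i j)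
  simp only [Matrix.trace, Matrix.diag_apply, Matrix.mul_apply]
  push_cast
  apply Finset.sum_congr rfl
  intro i _
  apply Finset.sum_congr rfl
  intro j _
  rw [hMsymm i j, mul_star_aux]
  push_cast
  ring

-- at most one nonzero term
private lemma norm_sq_sum_le_aux {n : ℕ} (f : Fin n → ℂ)
    (h : ∀ k l, f k ≠ 0 → f l ≠ 0 → k = l) :
    ‖∑ k, f k‖ ^ 2 ≤ ∑ k, ‖f k‖ ^ 2 := by
  by_cases hex : ∃ k, f k ≠ 0
  · obtain ⟨k₀, hk₀⟩ := hex
    have hsum : ∑ k, f k = f k₀ := by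
      apply Finset.sum_eq_single_of_mem k₀ (Finset.mem_univ _)
      intro l _ hl
      by_contra hfl
      exact hl (h l k₀ hfl hk₀)
    rw [hsum]
    exact Finset.single_le_sum (fun k _ => sq_nonneg ‖f k‖) (Finset.mem_univ k₀)
  · push_neg at hex
    simp [hex]

/-- If `G` is a graph on `n` vertices of girth at least 5 (no cycles of length 3 or 4) and
`B` is a Hermitian weighted adjacency matrix of `G` each of whose rows has `L²` norm `1`,
then `B` has at least `n/4` non-negative eigenvalues. -/
theorem inertia_bound_girth_five_normalized (n : ℕ) (G : SimpleGraph (Fin n))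
    (hC3 : ∀ a b c : Fin n, G.Adj a b → G.Adj b c → ¬ G.Adj c a)
    (hC4 : C4Free G)
    (B : Matrix (Fin n) (Fin n) ℂ) (hB : B.IsHermitian)
    (hsupp : ∀ i j, ¬ G.Adj i j → B i j = 0)
    (hnorm : ∀ i, ∑ j, ‖B i j‖ ^ 2 = 1) :
    (n : ℝ) / 4 ≤ (Fintype.card {i : Fin n // 0 ≤ hB.eigenvalues i} : ℝ) := by
  classical
  set μ : Fin n → ℝ := hB.eigenvalues with hμdef
  -- Hermitian symmetry pointwise
  have hsymm : ∀ i j : Fin n, B j i = star (B i j) := fun i j =>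
    (congrFun (congrFun hB.symm j) i).trans (Matrix.conjTranspose_apply B i j)
  have hdiagB : ∀ i, B i i = 0 := fun i => hsupp i i (G.irrefl)
  have hmulconj : ∀ i j, B i j * B j i = ((‖B i j‖ ^ 2 : ℝ) : ℂ) := by
    intro i j
    rw [hsymm i j, mul_star_aux]
  have key_inner : ∀ i, ∑ j, B i j * B j i = 1 := by
    intro i
    rw [Finset.sum_congr rfl (fun j _ => hmulconj i j)]
    rw [show ∑ j, ((‖B i j‖ ^ 2 : ℝ) : ℂ) = ((∑ j, ‖B i j‖ ^ 2 : ℝ) : ℂ) by push_cast; ring]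
    rw [hnorm i]
    norm_num
  -- spectral: trace of powers
  have spec : ∀ k : ℕ, (B ^ k).trace = ∑ i, (μ i : ℂ) ^ k := by
    intro k
    have hU2 := (hB.eigenvectorUnitary).2
    have hUU : star (hB.eigenvectorUnitary : Matrix (Fin n) (Fin n) ℂ) *
        (hB.eigenvectorUnitary : Matrix (Fin n) (Fin n) ℂ) = 1 :=
      Matrix.mem_unitaryGroup_iff'.mp hU2
    have hUU' : (hB.eigenvectorUnitary : Matrix (Fin n) (Fin n) ℂ) *
        star (hB.eigenvectorUnitary : Matrix (Fin n) (Fin n) ℂ) = 1 :=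
      Matrix.mem_unitaryGroup_iff.mp hU2
    rw [conj_pow_aux _ _ _ hUU hUU' hB.spectral_theorem k]
    rw [Matrix.trace_mul_cycle, hUU, one_mul, Matrix.diagonal_pow, Matrix.trace_diagonal]
    rfl
  -- traces
  have hT1 : B.trace = 0 := by
    simp [Matrix.trace, Matrix.diag, hdiagB]
  have hS1 : ∑ i, μ i = 0 := by
    have h := spec 1
    simp only [pow_one] at h
    rw [hT1] at h
    exact_mod_cast h.symm
  have hT2 : (B ^ 2).trace = (n : ℂ) := by
    rw [pow_two]
    simp only [Matrix.trace, Matrix.diag_apply, Matrix.mul_apply]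
    rw [Finset.sum_congr rfl (fun i _ => key_inner i)]
    simp
  have hS2 : ∑ i, μ i ^ 2 = n := by
    have h := (spec 2).symm.trans hT2
    exact_mod_cast h
  have hT3 : (B ^ 3).trace = 0 := by
    rw [show (3:ℕ) = 2 + 1 by norm_num, pow_succ, pow_two]
    simp only [Matrix.trace, Matrix.diag_apply, Matrix.mul_apply, Finset.sum_mul]
    apply Finset.sum_eq_zero; intro i _
    apply Finset.sum_eq_zero; intro k _
    apply Finset.sum_eq_zero; intro j _
    by_cases h1 : G.Adj i j
    · by_cases h2 : G.Adj j k
      · rw [hsupp k i (hC3 i j k h1 h2), mul_zero]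
      · rw [hsupp j k h2, mul_zero, zero_mul]
    · rw [hsupp i j h1, zero_mul, zero_mul]
  have hS3 : ∑ i, μ i ^ 3 = 0 := by
    have h := (spec 3).symm.trans hT3
    exact_mod_cast h
  -- trace of B^4
  have hM : (B * B).IsHermitian := by
    have h := hB.pow 2
    rwa [pow_two] at h
  have hT4 : (B ^ 4).trace = ((∑ i, ∑ j, ‖(B * B) i j‖ ^ 2 : ℝ) : ℂ) := by
    rw [show B ^ 4 = (B * B) * (B * B) by rw [show (4:ℕ) = 2 + 2 from rfl, pow_add, pow_two]]
    exact trace_sq_aux _ hM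
  have hS4 : ∑ i, μ i ^ 4 = ∑ i, ∑ j, ‖(B * B) i j‖ ^ 2 := by
    have h := (spec 4).symm.trans hT4
    exact_mod_cast h
  -- combinatorial bound on the fourth moment
  have hdiagM : ∀ i, (B * B) i i = 1 := by
    intro i
    rw [Matrix.mul_apply]
    exact key_inner i
  have hoffbound : ∀ i, ∑ j ∈ Finset.univ.erase i, ‖(B * B) i j‖ ^ 2 ≤ 1 := by
    intro i
    have hoff : ∀ j ∈ Finset.univ.erase i, ‖(B * B) i j‖ ^ 2 ≤
        ∑ k, ‖B i k‖ ^ 2 * ‖B k j‖ ^ 2 := by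
      intro j hj
      have hij : i ≠ j := (Finset.ne_of_mem_erase hj).symm
      have huniq : ∀ k l : Fin n, B i k * B k j ≠ 0 → B i l * B l j ≠ 0 → k = l := by
        intro k l hk hl
        have hik : G.Adj i k := by
          by_contra h; exact hk (by rw [hsupp i k h, zero_mul])
        have hkj : G.Adj k j := by
          by_contra h; exact hk (by rw [hsupp k j h, mul_zero])
        have hil : G.Adj i l := by
          by_contra h; exact hl (by rw [hsupp i l h, zero_mul])
        have hlj : G.Adj l j := by
          by_contra h; exact hl (by rw [hsupp l j h, mul_zero])
        by_contra hkl
        by_cases hadj : G.Adj i j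
        · exact hC3 i k j hik hkj hadj.symm
        · exact hC4 i k j l (G.ne_of_adj hik) hij (G.ne_of_adj hil) (G.ne_of_adj hkj)
            hkl (Ne.symm (G.ne_of_adj hlj)) hik hkj hlj.symm hil.symm
      calc ‖(B * B) i j‖ ^ 2 = ‖∑ k, B i k * B k j‖ ^ 2 := by rw [Matrix.mul_apply]
        _ ≤ ∑ k, ‖B i k * B k j‖ ^ 2 := norm_sq_sum_le_aux _ huniq
        _ = ∑ k, ‖B i k‖ ^ 2 * ‖B k j‖ ^ 2 := by
            apply Finset.sum_congr rfl; intro k _; rw [norm_mul, mul_pow]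
    calc ∑ j ∈ Finset.univ.erase i, ‖(B * B) i j‖ ^ 2
        ≤ ∑ j ∈ Finset.univ.erase i, ∑ k, ‖B i k‖ ^ 2 * ‖B k j‖ ^ 2 :=
          Finset.sum_le_sum hoff
      _ ≤ ∑ j, ∑ k, ‖B i k‖ ^ 2 * ‖B k j‖ ^ 2 :=
          Finset.sum_le_sum_of_subset_of_nonneg (Finset.erase_subset _ _)
            (fun j _ _ => Finset.sum_nonneg
              (fun k _ => mul_nonneg (sq_nonneg _) (sq_nonneg _)))
      _ = ∑ k, ‖B i k‖ ^ 2 * ∑ j, ‖B k j‖ ^ 2 := by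
          rw [Finset.sum_comm]
          apply Finset.sum_congr rfl
          intro k _
          rw [Finset.mul_sum]
      _ = ∑ k, ‖B i k‖ ^ 2 := by
          apply Finset.sum_congr rfl
          intro k _
          rw [hnorm k, mul_one]
      _ = 1 := hnorm i
  have hbound : ∑ i, ∑ j, ‖(B * B) i j‖ ^ 2 ≤ 2 * n := by
    calc ∑ i, ∑ j, ‖(B * B) i j‖ ^ 2 ≤ ∑ _i : Fin n, (2 : ℝ) := by
          apply Finset.sum_le_sum
          intro i _
          have hsplit : ‖(B * B) i i‖ ^ 2 + ∑ j ∈ Finset.univ.erase i, ‖(B * B) i j‖ ^ 2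
              = ∑ j, ‖(B * B) i j‖ ^ 2 :=
            Finset.add_sum_erase Finset.univ (fun j => ‖(B * B) i j‖ ^ 2) (Finset.mem_univ i)
          have h1 : ‖(B * B) i i‖ ^ 2 = 1 := by rw [hdiagM i]; norm_num
          have h2 := hoffbound i
          rw [← hsplit, h1]
          linarith
      _ = 2 * n := by simp [Finset.sum_const, Finset.card_univ]; ring
  have hS4le : ∑ i, μ i ^ 4 ≤ 2 * n := by rw [hS4]; exact hbound
  -- the polynomial part
  set s : ℝ := Real.sqrt 2 with hsdef
  have hs : s ^ 2 = 2 := Real.sq_sqrt (by norm_num)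
  have hs0 : (0:ℝ) ≤ s := Real.sqrt_nonneg 2
  have hptwise_all : ∀ x : ℝ, 0 ≤ 2*x^4 + s*x^3 - 8*x^2 - 6*s*x + 16 := by
    intro x
    have e2 : (x-s)^2*((4*x+5*s)^2+14) = 8*(2*x^4+s*x^3-8*x^2-6*s*x+16) := by
      linear_combination (-39*x^2 - 10*s*x + 25*s^2 + 64) * hs
    nlinarith [mul_nonneg (sq_nonneg (x-s)) (by positivity : (0:ℝ) ≤ (4*x+5*s)^2+14)]
  have hptwise_neg : ∀ x : ℝ, x ≤ 0 → 16 ≤ 2*x^4 + s*x^3 - 8*x^2 - 6*s*x + 16 := by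
    intro x hx
    have e1 : (x*(2*x-3*s))*(x+s)^2 = 2*x^4 + s*x^3 - 8*x^2 - 6*s*x := by
      linear_combination (-4*x^2 - 3*s*x) * hs
    have h1 : 0 ≤ x*(2*x-3*s) := by nlinarith
    nlinarith [mul_nonneg h1 (sq_nonneg (x+s))]
  -- counting
  have hcardsub : (Fintype.card {i : Fin n // 0 ≤ μ i}) =
      (Finset.univ.filter (fun i => 0 ≤ μ i)).card := Fintype.card_subtype _
  have hcards : (Finset.univ.filter (fun i => 0 ≤ μ i)).card +
      (Finset.univ.filter (fun i => ¬ 0 ≤ μ i)).card = n := by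
    rw [Finset.card_filter_add_card_filter_not]
    simp
  have hNbound : ((Finset.univ.filter (fun i => ¬ 0 ≤ μ i)).card : ℝ) * 16 ≤ 12 * n := by
    have hexp : ∑ i, (2*(μ i)^4 + s*(μ i)^3 - 8*(μ i)^2 - 6*s*(μ i) + 16)
        = 2*(∑ i, (μ i)^4) + s*(∑ i, (μ i)^3) - 8*(∑ i, (μ i)^2) - 6*s*(∑ i, (μ i)) + 16*n := by
      simp only [Finset.sum_add_distrib, Finset.sum_sub_distrib, ← Finset.mul_sum,
        Finset.sum_const, Finset.card_univ, Fintype.card_fin, nsmul_eq_mul]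
      ring
    have hchain : ((Finset.univ.filter (fun i => ¬ 0 ≤ μ i)).card : ℝ) * 16
        ≤ ∑ i, (2*(μ i)^4 + s*(μ i)^3 - 8*(μ i)^2 - 6*s*(μ i) + 16) := by
      calc ((Finset.univ.filter (fun i => ¬ 0 ≤ μ i)).card : ℝ) * 16
          = ∑ _i ∈ Finset.univ.filter (fun i => ¬ 0 ≤ μ i), (16:ℝ) := by
            rw [Finset.sum_const, nsmul_eq_mul]
        _ ≤ ∑ i ∈ Finset.univ.filter (fun i => ¬ 0 ≤ μ i),
              (2*(μ i)^4 + s*(μ i)^3 - 8*(μ i)^2 - 6*s*(μ i) + 16) := by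
            apply Finset.sum_le_sum
            intro i hi
            have : ¬ 0 ≤ μ i := (Finset.mem_filter.mp hi).2
            exact hptwise_neg (μ i) (le_of_not_ge this)
        _ ≤ ∑ i, (2*(μ i)^4 + s*(μ i)^3 - 8*(μ i)^2 - 6*s*(μ i) + 16) :=
            Finset.sum_le_sum_of_subset_of_nonneg (Finset.filter_subset _ _)
              (fun i _ _ => hptwise_all (μ i))
    rw [hexp] at hchain
    rw [hS1, hS2, hS3] at hchain
    nlinarith [hS4le]
  rw [hcardsub]
  have hle : ((Finset.univ.filter (fun i => ¬ 0 ≤ μ i)).card : ℝ) ≤ 3 * n / 4 := by linarith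
  have : ((Finset.univ.filter (fun i => 0 ≤ μ i)).card : ℝ)
      = n - ((Finset.univ.filter (fun i => ¬ 0 ≤ μ i)).card : ℝ) := by
    have := hcards
    push_cast [← this]
    ring
  rw [this]
  linarith
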